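/- Let (θ_n) be any sequence of real numbers, let α > 1, and let L > 0. Then there exists a real number λ with L ≤ λ ≤ L + 1/(α−1) such that for every n ≥ 1, ‖λα^n − θ_n‖ ≤ 1/(2(α−1)). -/

import Mathlib

/-- For a real number `x`, the distance from `x` to the nearest integer. -/
noncomputable def distNearestInt (x : ℝ) : ℝ := |x - round x|

/-- Left endpoints of the nested intervals used in the construction. -/
noncomputable def nestedLeft (θ : ℕ → ℝ) (α L c : ℝ) : ℕ → ℝ
  | 0 => L
  | (n+1) =>
      ((⌈nestedLeft θ α L c n * α ^ (n+1) + c / 2 - θ (n+1)⌉ : ℤ) + θ (n+1) - c / 2) / α ^ (n+1)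

lemma nestedLeft_mul (θ : ℕ → ℝ) (α L c : ℝ) (hα : 1 < α) (n : ℕ) :
    nestedLeft θ α L c (n+1) * α ^ (n+1) =
      (⌈nestedLeft θ α L c n * α ^ (n+1) + c / 2 - θ (n+1)⌉ : ℤ) + θ (n+1) - c / 2 := by
  have hpow : (0:ℝ) < α ^ (n+1) := pow_pos (by linarith) _
  rw [nestedLeft]
  field_simp

lemma nestedLeft_mono (θ : ℕ → ℝ) (α L c : ℝ) (hα : 1 < α) (n : ℕ) :
    nestedLeft θ α L c n ≤ nestedLeft θ α L c (n+1) := by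
  have hpow : (0:ℝ) < α ^ (n+1) := pow_pos (by linarith) _
  have h := nestedLeft_mul θ α L c hα n
  have hceil := Int.le_ceil (nestedLeft θ α L c n * α ^ (n+1) + c / 2 - θ (n+1))
  have : nestedLeft θ α L c n * α ^ (n+1) ≤ nestedLeft θ α L c (n+1) * α ^ (n+1) := by
    rw [h]; linarith
  exact le_of_mul_le_mul_right this hpow

lemma nestedRight_anti (θ : ℕ → ℝ) (α L : ℝ) (hα : 1 < α) (n : ℕ) :
    nestedLeft θ α L (1/(α-1)) (n+1) + (1/(α-1)) / α ^ (n+1) ≤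
      nestedLeft θ α L (1/(α-1)) n + (1/(α-1)) / α ^ n := by
  set c : ℝ := 1/(α-1) with hc
  have hα1 : (0:ℝ) < α - 1 := by linarith
  have hpow : (0:ℝ) < α ^ (n+1) := pow_pos (by linarith) _
  have hpown : (0:ℝ) < α ^ n := pow_pos (by linarith) _
  have h := nestedLeft_mul θ α L c hα n
  have hceil := (Int.ceil_lt_add_one (nestedLeft θ α L c n * α ^ (n+1) + c / 2 - θ (n+1))).le
  -- key: 1 + c = c * α
  have hkey : 1 + c = c * α := by
    rw [hc]; field_simp; ring
  have h1 : nestedLeft θ α L c (n+1) * α ^ (n+1) + c ≤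
      nestedLeft θ α L c n * α ^ (n+1) + c * α := by
    rw [h]; linarith
  have h2 : (nestedLeft θ α L c (n+1) + c / α ^ (n+1)) * α ^ (n+1) ≤
      (nestedLeft θ α L c n + c / α ^ n) * α ^ (n+1) := by
    have hαpow : α ^ (n+1) = α ^ n * α := by ring
    have hd : c / α ^ (n+1) * α ^ (n+1) = c := by field_simp
    have hd2 : c / α ^ n * α ^ (n+1) = c * α := by
      rw [hαpow]; field_simp
    calc (nestedLeft θ α L c (n+1) + c / α ^ (n+1)) * α ^ (n+1)
        = nestedLeft θ α L c (n+1) * α ^ (n+1) + c / α ^ (n+1) * α ^ (n+1) := by ring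
      _ = nestedLeft θ α L c (n+1) * α ^ (n+1) + c := by rw [hd]
      _ ≤ nestedLeft θ α L c n * α ^ (n+1) + c * α := h1
      _ = nestedLeft θ α L c n * α ^ (n+1) + c / α ^ n * α ^ (n+1) := by rw [hd2]
      _ = (nestedLeft θ α L c n + c / α ^ n) * α ^ (n+1) := by ring
  exact le_of_mul_le_mul_right h2 hpow

theorem exists_lambda_alpha_pow_close_to_sequence
    (θ : ℕ → ℝ) (α L : ℝ) (hα : 1 < α) (hL : 0 < L) :
    ∃ lam : ℝ, L ≤ lam ∧ lam ≤ L + 1 / (α - 1) ∧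
      ∀ n : ℕ, 1 ≤ n → distNearestInt (lam * α ^ n - θ n) ≤ 1 / (2 * (α - 1)) := by
  have hα1 : (0:ℝ) < α - 1 := by linarith
  set c : ℝ := 1/(α-1) with hc
  have hcpos : 0 < c := by positivity
  set a : ℕ → ℝ := nestedLeft θ α L c with ha
  set b : ℕ → ℝ := fun n => a n + c / α ^ n with hb
  have hamono : Monotone a := monotone_nat_of_le_succ (fun n => nestedLeft_mono θ α L c hα n)
  have hbanti : Antitone b := antitone_nat_of_succ_le (fun n => nestedRight_anti θ α L hα n)
  have haleb : ∀ n, a n ≤ b n := fun n => by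
    have : 0 < c / α ^ n := by positivity
    simp only [hb]; linarith
  have hab : ∀ m n, a m ≤ b n := by
    intro m n
    rcases le_total m n with h | h
    · exact (hamono h).trans (haleb n)
    · exact (haleb m).trans (hbanti h)
  have hbdd : BddAbove (Set.range a) := ⟨b 0, by rintro x ⟨m, rfl⟩; exact hab m 0⟩
  set lam : ℝ := sSup (Set.range a) with hlam
  have halam : ∀ n, a n ≤ lam := fun n => le_csSup hbdd ⟨n, rfl⟩
  have hlamb : ∀ n, lam ≤ b n := fun n =>
    csSup_le (Set.range_nonempty a) (by rintro x ⟨m, rfl⟩; exact hab m n)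
  have ha0 : a 0 = L := rfl
  refine ⟨lam, ?_, ?_, ?_⟩
  · rw [← ha0]; exact halam 0
  · have := hlamb 0
    simpa [hb, ha0, hc] using this
  · intro n hn
    obtain ⟨k, rfl⟩ : ∃ k, n = k + 1 := ⟨n - 1, by omega⟩
    have hpow : (0:ℝ) < α ^ (k+1) := pow_pos (by linarith) _
    set m : ℤ := ⌈a k * α ^ (k+1) + c / 2 - θ (k+1)⌉ with hm
    have hmul : a (k+1) * α ^ (k+1) = (m:ℝ) + θ (k+1) - c / 2 := nestedLeft_mul θ α L c hα k
    have h1 : a (k+1) * α ^ (k+1) ≤ lam * α ^ (k+1) :=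
      mul_le_mul_of_nonneg_right (halam (k+1)) hpow.le
    have h2 : lam * α ^ (k+1) ≤ a (k+1) * α ^ (k+1) + c := by
      have := mul_le_mul_of_nonneg_right (hlamb (k+1)) hpow.le
      have hd : (a (k+1) + c / α ^ (k+1)) * α ^ (k+1) = a (k+1) * α ^ (k+1) + c := by
        field_simp
      rw [hb] at this
      simpa [hd] using this
    have hdist : |lam * α ^ (k+1) - θ (k+1) - (m:ℝ)| ≤ c / 2 := by
      rw [abs_le]; constructor <;> nlinarith
    have hround := round_le (lam * α ^ (k+1) - θ (k+1)) m
    have hc2 : c / 2 = 1 / (2 * (α - 1)) := by rw [hc]; field_simp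
    rw [distNearestInt]
    calc |lam * α ^ (k+1) - θ (k+1) - round (lam * α ^ (k+1) - θ (k+1))|
        ≤ |lam * α ^ (k+1) - θ (k+1) - (m:ℝ)| := hround
      _ ≤ c / 2 := hdist
      _ = 1 / (2 * (α - 1)) := hc2
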